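/- Closure upper bound for the null parameter set: if P₀ = {P : θ₀ ∈ Θ₀(P)} is nonempty, then cl(P₀) = {P : A x = β(P) for some x ≥ 0}, where Θ₀(P) = {θ(Q) : Q rationalizes P, Q{R ∈ R'} > 0}; in particular, for each P̃ with A x = β(P̃) solvable in x ≥ 0, the convex combinations P_n = λ_n P + (1 − λ_n) P̃ with λ_n ↓ 0, λ_n > 0, and P ∈ P₀ all lie in P₀ and converge to P̃. -/

import Mathlib

/-- A conditional probability system: `p(y,d,z)` is nonnegative and, for each `z`,
`(p(y,d,z))_{y,d}` is a probability vector (the conditional distribution of `(Y,D)`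
given `Z = z`). -/
def CondPmf {𝒴 𝒟 𝒵 : Type} [Fintype 𝒴] [Fintype 𝒟]
    (p : 𝒴 × 𝒟 × 𝒵 → ℝ) : Prop :=
  (∀ m, 0 ≤ p m) ∧ ∀ z : 𝒵, (∑ y, ∑ d, p (y, d, z)) = 1

/-- `Q` (identified with the distribution `x` of the response type, with `Z` exogenous)
rationalizes `P` (identified with its conditional probabilities `p`): `x` is a
probability vector supported on `𝓡` whose induced observed conditional probabilities
are `p`. -/
def Rationalizes {𝒴 𝒟 𝒵 : Type} [Fintype 𝒴] [Fintype 𝒟] [Fintype 𝒵]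
    [DecidableEq 𝒴] [DecidableEq 𝒟] [DecidableEq 𝒵]
    (𝓡 : Finset ((𝒟 → 𝒴) × (𝒵 → 𝒟)))
    (x : ((𝒟 → 𝒴) × (𝒵 → 𝒟)) → ℝ) (p : 𝒴 × 𝒟 × 𝒵 → ℝ) : Prop :=
  (∀ r, 0 ≤ x r) ∧ (∑ r, x r) = 1 ∧ (∀ r ∉ 𝓡, x r = 0) ∧
    ∀ (y : 𝒴) (d : 𝒟) (z : 𝒵),
      (∑ r : (𝒟 → 𝒴) × (𝒵 → 𝒟), if r.1 d = y ∧ r.2 z = d then x r else 0)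
        = p (y, d, z)

/-- The null parameter set `P₀ = {P : θ₀ ∈ Θ₀(P)}`, where
`Θ₀(P) = {θ(Q) : Q rationalizes P, Q{R ∈ R'} > 0}` and `θ(Q) = E_Q[g(R) | R ∈ R']`. -/
def P0set {𝒴 𝒟 𝒵 : Type} [Fintype 𝒴] [Fintype 𝒟] [Fintype 𝒵]
    [DecidableEq 𝒴] [DecidableEq 𝒟] [DecidableEq 𝒵]
    (𝓡 R' : Finset ((𝒟 → 𝒴) × (𝒵 → 𝒟)))
    (g : ((𝒟 → 𝒴) × (𝒵 → 𝒟)) → ℝ) (θ₀ : ℝ) : Set (𝒴 × 𝒟 × 𝒵 → ℝ) :=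
  {p | CondPmf p ∧ ∃ x, Rationalizes 𝓡 x p ∧ 0 < (∑ r ∈ R', x r) ∧
        (∑ r ∈ R', g r * x r) / (∑ r ∈ R', x r) = θ₀}

/-- The set `{P : Ax = β(P) for some x ≥ 0}`, with `A` and `β` as in Lemma 1. -/
def PtildeSet {𝒴 𝒟 𝒵 : Type} [Fintype 𝒴] [Fintype 𝒟] [Fintype 𝒵]
    [DecidableEq 𝒴] [DecidableEq 𝒟] [DecidableEq 𝒵]
    (𝓡 R' : Finset ((𝒟 → 𝒴) × (𝒵 → 𝒟)))
    (g : ((𝒟 → 𝒴) × (𝒵 → 𝒟)) → ℝ) (θ₀ : ℝ) : Set (𝒴 × 𝒟 × 𝒵 → ℝ) :=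
  {p | CondPmf p ∧ ∃ x : ((𝒟 → 𝒴) × (𝒵 → 𝒟)) → ℝ, (∀ r, 0 ≤ x r) ∧
        (∀ (y : 𝒴) (d : 𝒟) (z : 𝒵),
          (∑ r : (𝒟 → 𝒴) × (𝒵 → 𝒟), if r.1 d = y ∧ r.2 z = d then x r else 0)
            = p (y, d, z)) ∧
        (∑ r ∈ 𝓡, x r) = 1 ∧ (∑ r ∈ R', (g r - θ₀) * x r) = 0}

section Helpers
variable {𝒴 𝒟 𝒵 : Type} [Fintype 𝒴] [Fintype 𝒟] [Fintype 𝒵]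
    [DecidableEq 𝒴] [DecidableEq 𝒟] [DecidableEq 𝒵]

lemma marg_sum (x : ((𝒟 → 𝒴) × (𝒵 → 𝒟)) → ℝ) (z : 𝒵) :
    ∑ y, ∑ d, (∑ r : (𝒟 → 𝒴) × (𝒵 → 𝒟), if r.1 d = y ∧ r.2 z = d then x r else 0)
      = ∑ r : (𝒟 → 𝒴) × (𝒵 → 𝒟), x r := by
  have h1 : ∀ y : 𝒴, (∑ d, ∑ r : (𝒟 → 𝒴) × (𝒵 → 𝒟), if r.1 d = y ∧ r.2 z = d then x r else 0)
      = ∑ r : (𝒟 → 𝒴) × (𝒵 → 𝒟), ∑ d, if r.1 d = y ∧ r.2 z = d then x r else 0 :=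
    fun y => Finset.sum_comm
  simp only [h1]
  rw [Finset.sum_comm]
  refine Finset.sum_congr rfl fun r _ => ?_
  rw [Finset.sum_comm]
  simp [ite_and, Finset.sum_ite_eq]

lemma total_one [Nonempty 𝒵] {x : ((𝒟 → 𝒴) × (𝒵 → 𝒟)) → ℝ} {p : 𝒴 × 𝒟 × 𝒵 → ℝ}
    (heq : ∀ (y : 𝒴) (d : 𝒟) (z : 𝒵),
      (∑ r : (𝒟 → 𝒴) × (𝒵 → 𝒟), if r.1 d = y ∧ r.2 z = d then x r else 0) = p (y, d, z))
    (hp : CondPmf p) : (∑ r : (𝒟 → 𝒴) × (𝒵 → 𝒟), x r) = 1 := by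
  obtain ⟨z⟩ := ‹Nonempty 𝒵›
  rw [← marg_sum x z]
  simp only [heq]
  exact hp.2 z

lemma zero_off {x : ((𝒟 → 𝒴) × (𝒵 → 𝒟)) → ℝ} {𝓡 : Finset ((𝒟 → 𝒴) × (𝒵 → 𝒟))}
    (hx0 : ∀ r, 0 ≤ x r) (h𝓡 : (∑ r ∈ 𝓡, x r) = 1)
    (htot : (∑ r : (𝒟 → 𝒴) × (𝒵 → 𝒟), x r) = 1) : ∀ r ∉ 𝓡, x r = 0 := by
  have hsd : (∑ r ∈ Finset.univ \ 𝓡, x r) = 0 := by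
    have := Finset.sum_sdiff (Finset.subset_univ 𝓡) (f := x)
    rw [htot, h𝓡] at this; linarith
  intro r hr
  exact (Finset.sum_eq_zero_iff_of_nonneg (fun i _ => hx0 i)).1 hsd r
    (by simp [Finset.mem_sdiff, hr])

lemma P0_subset_Ptilde [Nonempty 𝒵] (𝓡 R' : Finset ((𝒟 → 𝒴) × (𝒵 → 𝒟)))
    (g : ((𝒟 → 𝒴) × (𝒵 → 𝒟)) → ℝ) (θ₀ : ℝ) :
    P0set 𝓡 R' g θ₀ ⊆ PtildeSet 𝓡 R' g θ₀ := by
  rintro p ⟨hp, x, ⟨hx0, hsum, hoff, heq⟩, hs, hθ⟩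
  refine ⟨hp, x, hx0, heq, ?_, ?_⟩
  · rw [← hsum]
    exact Finset.sum_subset (Finset.subset_univ 𝓡) (fun r _ hr => hoff r hr)
  · have hgx : (∑ r ∈ R', g r * x r) = θ₀ * (∑ r ∈ R', x r) :=
      (div_eq_iff (ne_of_gt hs)).1 hθ
    have : (∑ r ∈ R', (g r - θ₀) * x r)
        = (∑ r ∈ R', g r * x r) - θ₀ * (∑ r ∈ R', x r) := by
      rw [Finset.mul_sum, ← Finset.sum_sub_distrib]
      exact Finset.sum_congr rfl fun r _ => by ring
    rw [this, hgx]; ring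

lemma Ptilde_isClosed [Nonempty 𝒵] (𝓡 R' : Finset ((𝒟 → 𝒴) × (𝒵 → 𝒟)))
    (g : ((𝒟 → 𝒴) × (𝒵 → 𝒟)) → ℝ) (θ₀ : ℝ) :
    IsClosed (PtildeSet 𝓡 R' g θ₀) := by
  rw [← isSeqClosed_iff_isClosed]
  intro pn p hmem htend
  simp only [PtildeSet, Set.mem_setOf_eq] at hmem ⊢
  choose hc x hx0 heq h𝓡 hR' using hmem
  have hpn : ∀ (m : 𝒴 × 𝒟 × 𝒵), Filter.Tendsto (fun n => pn n m) Filter.atTop (nhds (p m)) :=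
    fun m => (tendsto_pi_nhds.1 htend) m
  have hcp : CondPmf p := by
    constructor
    · intro m
      exact le_of_tendsto_of_tendsto tendsto_const_nhds (hpn m)
        (Filter.Eventually.of_forall fun n => (hc n).1 m)
    · intro z
      have h1 : Filter.Tendsto (fun n => ∑ y, ∑ d, pn n (y, d, z)) Filter.atTop
          (nhds (∑ y, ∑ d, p (y, d, z))) := by
        apply tendsto_finset_sum
        intro y _
        exact tendsto_finset_sum _ (fun d _ => hpn (y, d, z))
      have h2 : (fun n => ∑ y, ∑ d, pn n (y, d, z)) = fun _ => (1 : ℝ) :=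
        funext fun n => (hc n).2 z
      rw [h2] at h1
      exact tendsto_nhds_unique h1 tendsto_const_nhds
  have hxs : ∀ n, x n ∈ stdSimplex ℝ ((𝒟 → 𝒴) × (𝒵 → 𝒟)) :=
    fun n => ⟨hx0 n, total_one (heq n) (hc n)⟩
  obtain ⟨xl, hxls, φ, hφ, hxt⟩ := (isCompact_stdSimplex ℝ _).tendsto_subseq hxs
  have hxr : ∀ r, Filter.Tendsto (fun k => x (φ k) r) Filter.atTop (nhds (xl r)) :=
    fun r => (tendsto_pi_nhds.1 hxt) r
  refine ⟨hcp, xl, hxls.1, ?_, ?_, ?_⟩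
  · intro y d z
    have hL : Filter.Tendsto
        (fun k => ∑ r : (𝒟 → 𝒴) × (𝒵 → 𝒟), if r.1 d = y ∧ r.2 z = d then x (φ k) r else 0)
        Filter.atTop
        (nhds (∑ r : (𝒟 → 𝒴) × (𝒵 → 𝒟), if r.1 d = y ∧ r.2 z = d then xl r else 0)) := by
      apply tendsto_finset_sum
      intro r _
      by_cases h : r.1 d = y ∧ r.2 z = d
      · simp only [if_pos h]; exact hxr r
      · simp only [if_neg h]; exact tendsto_const_nhds
    have hR : Filter.Tendsto (fun k => pn (φ k) (y, d, z)) Filter.atTop (nhds (p (y, d, z))) :=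
      (hpn (y, d, z)).comp hφ.tendsto_atTop
    have : (fun k => ∑ r : (𝒟 → 𝒴) × (𝒵 → 𝒟), if r.1 d = y ∧ r.2 z = d then x (φ k) r else 0)
        = fun k => pn (φ k) (y, d, z) := funext fun k => heq (φ k) y d z
    rw [this] at hL
    exact tendsto_nhds_unique hL hR
  · have hL : Filter.Tendsto (fun k => ∑ r ∈ 𝓡, x (φ k) r) Filter.atTop
        (nhds (∑ r ∈ 𝓡, xl r)) := tendsto_finset_sum _ (fun r _ => hxr r)
    have : (fun k => ∑ r ∈ 𝓡, x (φ k) r) = fun _ => (1 : ℝ) := funext fun k => h𝓡 (φ k)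
    rw [this] at hL
    exact tendsto_nhds_unique hL tendsto_const_nhds
  · have hL : Filter.Tendsto (fun k => ∑ r ∈ R', (g r - θ₀) * x (φ k) r) Filter.atTop
        (nhds (∑ r ∈ R', (g r - θ₀) * xl r)) :=
      tendsto_finset_sum _ (fun r _ => (hxr r).const_mul _)
    have : (fun k => ∑ r ∈ R', (g r - θ₀) * x (φ k) r) = fun _ => (0 : ℝ) :=
      funext fun k => hR' (φ k)
    rw [this] at hL
    exact tendsto_nhds_unique hL tendsto_const_nhds

end Helpers
section Combo
variable {𝒴 𝒟 𝒵 : Type} [Fintype 𝒴] [Fintype 𝒟] [Fintype 𝒵]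
    [DecidableEq 𝒴] [DecidableEq 𝒟] [DecidableEq 𝒵] [Nonempty 𝒵]

lemma combo_mem_P0 (𝓡 R' : Finset ((𝒟 → 𝒴) × (𝒵 → 𝒟)))
    (g : ((𝒟 → 𝒴) × (𝒵 → 𝒟)) → ℝ) (θ₀ : ℝ)
    {p pt : 𝒴 × 𝒟 × 𝒵 → ℝ} (hp : p ∈ P0set 𝓡 R' g θ₀) (hpt : pt ∈ PtildeSet 𝓡 R' g θ₀)
    {l : ℝ} (hl0 : 0 < l) (hl1 : l ≤ 1) :
    (l • p + (1 - l) • pt) ∈ P0set 𝓡 R' g θ₀ := by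
  obtain ⟨hcp, x, ⟨hx0, hsum, hoff, heq⟩, hs, hθ⟩ := hp
  obtain ⟨hcpt, xt, hxt0, heqt, h𝓡t, hRt⟩ := hpt
  have htott : (∑ r : (𝒟 → 𝒴) × (𝒵 → 𝒟), xt r) = 1 := total_one heqt hcpt
  have hofft : ∀ r ∉ 𝓡, xt r = 0 := zero_off hxt0 h𝓡t htott
  have hl1' : 0 ≤ 1 - l := by linarith
  set q : 𝒴 × 𝒟 × 𝒵 → ℝ := l • p + (1 - l) • pt with hq
  have hqm : ∀ m, q m = l * p m + (1 - l) * pt m := fun m => rfl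
  set xc : ((𝒟 → 𝒴) × (𝒵 → 𝒟)) → ℝ := fun r => l * x r + (1 - l) * xt r with hxc
  have hxc0 : ∀ r, 0 ≤ xc r := fun r =>
    add_nonneg (mul_nonneg hl0.le (hx0 r)) (mul_nonneg hl1' (hxt0 r))
  have hxcsum : (∑ r : (𝒟 → 𝒴) × (𝒵 → 𝒟), xc r) = 1 := by
    simp only [hxc, Finset.sum_add_distrib, ← Finset.mul_sum, hsum, htott]; ring
  refine ⟨⟨fun m => ?_, fun z => ?_⟩, xc, ⟨hxc0, hxcsum, fun r hr => ?_, fun y d z => ?_⟩, ?_, ?_⟩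
  · rw [hqm]
    exact add_nonneg (mul_nonneg hl0.le (hcp.1 m)) (mul_nonneg hl1' (hcpt.1 m))
  · simp only [hqm, Finset.sum_add_distrib, ← Finset.mul_sum, hcp.2 z, hcpt.2 z]; ring
  · simp only [hxc, hoff r hr, hofft r hr]; ring
  · have hsplit : ∀ r : (𝒟 → 𝒴) × (𝒵 → 𝒟),
        (if r.1 d = y ∧ r.2 z = d then xc r else 0)
          = l * (if r.1 d = y ∧ r.2 z = d then x r else 0)
            + (1 - l) * (if r.1 d = y ∧ r.2 z = d then xt r else 0) := by
      intro r; by_cases h : r.1 d = y ∧ r.2 z = d <;> simp [h, hxc]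
    simp only [hsplit, Finset.sum_add_distrib, ← Finset.mul_sum, heq y d z, heqt y d z, hqm]
  · have h1 : (∑ r ∈ R', xc r) = l * (∑ r ∈ R', x r) + (1 - l) * (∑ r ∈ R', xt r) := by
      simp only [hxc, Finset.sum_add_distrib, ← Finset.mul_sum]
    rw [h1]
    have h2 : 0 ≤ (1 - l) * (∑ r ∈ R', xt r) :=
      mul_nonneg hl1' (Finset.sum_nonneg fun r _ => hxt0 r)
    nlinarith [mul_pos hl0 hs]
  · have hgx : (∑ r ∈ R', g r * x r) = θ₀ * (∑ r ∈ R', x r) := (div_eq_iff (ne_of_gt hs)).1 hθ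
    have hgxt : (∑ r ∈ R', g r * xt r) = θ₀ * (∑ r ∈ R', xt r) := by
      have : (∑ r ∈ R', (g r - θ₀) * xt r)
          = (∑ r ∈ R', g r * xt r) - θ₀ * (∑ r ∈ R', xt r) := by
        rw [Finset.mul_sum, ← Finset.sum_sub_distrib]
        exact Finset.sum_congr rfl fun r _ => by ring
      rw [this] at hRt; linarith
    have hnum : (∑ r ∈ R', g r * xc r)
        = θ₀ * (l * (∑ r ∈ R', x r) + (1 - l) * (∑ r ∈ R', xt r)) := by
      have : ∀ r ∈ R', g r * xc r = l * (g r * x r) + (1 - l) * (g r * xt r) :=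
        fun r _ => by simp only [hxc]; ring
      rw [Finset.sum_congr rfl this, Finset.sum_add_distrib, ← Finset.mul_sum, ← Finset.mul_sum,
        hgx, hgxt]
      ring
    have hden : (∑ r ∈ R', xc r) = l * (∑ r ∈ R', x r) + (1 - l) * (∑ r ∈ R', xt r) := by
      simp only [hxc, Finset.sum_add_distrib, ← Finset.mul_sum]
    have hdpos : 0 < l * (∑ r ∈ R', x r) + (1 - l) * (∑ r ∈ R', xt r) := by
      have h2 : 0 ≤ (1 - l) * (∑ r ∈ R', xt r) :=
        mul_nonneg hl1' (Finset.sum_nonneg fun r _ => hxt0 r)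
      nlinarith [mul_pos hl0 hs]
    rw [hnum, hden, mul_div_assoc, div_self (ne_of_gt hdpos), mul_one]

end Combo
/-- Closure characterization of the null parameter set: if `P₀` is nonempty, then
`cl(P₀) = {P : Ax = β(P) for some x ≥ 0}`; in particular, the convex combinations
`P_n = λ_n P + (1 − λ_n)P̃` with `λ_n ↓ 0`, `λ_n > 0`, `P ∈ P₀` and `P̃` in the
right-hand set all lie in `P₀` and converge to `P̃`. -/
theorem closure_P0_eq_Ptilde
    {𝒴 𝒟 𝒵 : Type} [Fintype 𝒴] [Fintype 𝒟] [Fintype 𝒵]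
    [DecidableEq 𝒴] [DecidableEq 𝒟] [DecidableEq 𝒵] [Nonempty 𝒵]
    (𝓡 R' : Finset ((𝒟 → 𝒴) × (𝒵 → 𝒟)))
    (g : ((𝒟 → 𝒴) × (𝒵 → 𝒟)) → ℝ) (θ₀ : ℝ)
    (hne : (P0set 𝓡 R' g θ₀).Nonempty) :
    closure (P0set 𝓡 R' g θ₀) = PtildeSet 𝓡 R' g θ₀ ∧
    ∀ p ∈ P0set 𝓡 R' g θ₀, ∀ pt ∈ PtildeSet 𝓡 R' g θ₀,
      ∀ lam : ℕ → ℝ, (∀ n, 0 < lam n) → (∀ n, lam n ≤ 1) → Antitone lam →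
        Filter.Tendsto lam Filter.atTop (nhds 0) →
        (∀ n, (lam n • p + (1 - lam n) • pt) ∈ P0set 𝓡 R' g θ₀) ∧
        Filter.Tendsto (fun n => lam n • p + (1 - lam n) • pt)
          Filter.atTop (nhds pt) := by
  classical
  have key : ∀ p ∈ P0set 𝓡 R' g θ₀, ∀ pt ∈ PtildeSet 𝓡 R' g θ₀,
      ∀ lam : ℕ → ℝ, (∀ n, 0 < lam n) → (∀ n, lam n ≤ 1) →
        Filter.Tendsto lam Filter.atTop (nhds 0) →
        (∀ n, (lam n • p + (1 - lam n) • pt) ∈ P0set 𝓡 R' g θ₀) ∧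
        Filter.Tendsto (fun n => lam n • p + (1 - lam n) • pt)
          Filter.atTop (nhds pt) := by
    intro p hp pt hpt lam hl0 hl1 hlt
    constructor
    · exact fun n => combo_mem_P0 𝓡 R' g θ₀ hp hpt (hl0 n) (hl1 n)
    · have hcont : Filter.Tendsto (fun c : ℝ => c • p + (1 - c) • pt) (nhds 0)
          (nhds ((0 : ℝ) • p + (1 - (0 : ℝ)) • pt)) := by
        apply Continuous.tendsto
        fun_prop
      have := hcont.comp hlt
      simpa [Function.comp_def] using this
  constructor
  · apply Set.Subset.antisymm
    · exact closure_minimal (P0_subset_Ptilde 𝓡 R' g θ₀) (Ptilde_isClosed 𝓡 R' g θ₀)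
    · intro pt hpt
      obtain ⟨p, hp⟩ := hne
      have hl0 : ∀ n : ℕ, (0 : ℝ) < 1 / (n + 1) := fun n => by positivity
      have hl1 : ∀ n : ℕ, (1 : ℝ) / (n + 1) ≤ 1 := fun n => by
        rw [div_le_one (by positivity)]; norm_cast; omega
      have hlt : Filter.Tendsto (fun n : ℕ => (1 : ℝ) / (n + 1)) Filter.atTop (nhds 0) :=
        tendsto_one_div_add_atTop_nhds_zero_nat
      obtain ⟨hmem, htend⟩ := key p hp pt hpt _ hl0 hl1 hlt
      exact mem_closure_of_tendsto htend (Filter.Eventually.of_forall hmem)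
  · intro p hp pt hpt lam hl0 hl1 _ hlt
    exact key p hp pt hpt lam hl0 hl1 hlt
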